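/- Let b ∈ [-B, B] with B ≥ 0, let c̃ > 0 and α ∈ (0,1). Define Δ as the unique solution of Φ(Δ) − Φ(−2B/c̃ − Δ) = 1 − α, where Φ is the standard normal CDF. Then for every b ∈ [-B, B] and X ~ N(b, c̃²), P(X ∈ [−B − c̃Δ, B + c̃Δ]) ≥ 1 − α. -/

import Mathlib

open ProbabilityTheory MeasureTheory Set

/-- Standard normal CDF. -/
noncomputable def stdNormalCDF (x : ℝ) : ℝ := (gaussianReal 0 1 (Set.Iic x)).toReal

noncomputable def phi (x : ℝ) : ℝ := gaussianPDFReal 0 1 x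

lemma phi_integrable : MeasureTheory.Integrable phi := integrable_gaussianPDFReal 0 1

lemma phi_nonneg (x : ℝ) : 0 ≤ phi x := gaussianPDFReal_nonneg 0 1 x

lemma phi_mono {x y : ℝ} (h : x ^ 2 ≤ y ^ 2) : phi y ≤ phi x := by
  simp only [phi, gaussianPDFReal, sub_zero, NNReal.coe_one, mul_one]
  apply mul_le_mul_of_nonneg_left _ (by positivity)
  apply Real.exp_le_exp.mpr
  linarith

lemma phi_even (x : ℝ) : phi (-x) = phi x := by
  simp [phi, gaussianPDFReal]

lemma stdNormalCDF_eq (x : ℝ) : stdNormalCDF x = ∫ t in Iic x, phi t := by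
  rw [stdNormalCDF, gaussianReal_apply_eq_integral 0 one_ne_zero]
  exact ENNReal.toReal_ofReal (setIntegral_nonneg measurableSet_Iic fun t _ => phi_nonneg t)

lemma stdNormalCDF_sub {x y : ℝ} :
    stdNormalCDF y - stdNormalCDF x = ∫ t in x..y, phi t := by
  rw [stdNormalCDF_eq, stdNormalCDF_eq]
  exact intervalIntegral.integral_Iic_sub_Iic phi_integrable.integrableOn
    phi_integrable.integrableOn

lemma stdNormalCDF_mono : Monotone stdNormalCDF := by
  intro x y h
  apply ENNReal.toReal_le_toReal (measure_ne_top _ _) (measure_ne_top _ _) |>.mpr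
  exact measure_mono (Iic_subset_Iic.mpr h)

lemma J_refl (a L : ℝ) : ∫ x in a..(a+L), phi x = ∫ x in (-a-L)..(-a-L+L), phi x := by
  have : ∫ x in (-a-L)..(-a-L+L), phi x = ∫ x in (-a-L)..(-a), phi x := by ring_nf
  rw [this]
  have h2 : ∫ x in (-a-L)..(-a), phi x = ∫ x in a..(a+L), phi (-x) := by
    rw [intervalIntegral.integral_comp_neg phi]
    ring_nf
  rw [h2]
  simp [phi_even]

lemma J_mono {a b L : ℝ} (hL : 0 ≤ L) (ha : -(L/2) ≤ a) (hab : a ≤ b) :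
    ∫ x in b..(b+L), phi x ≤ ∫ x in a..(a+L), phi x := by
  have hint : ∀ u v : ℝ, IntervalIntegrable phi volume u v :=
    fun u v => phi_integrable.intervalIntegrable
  have hint2 : ∀ u v : ℝ, IntervalIntegrable (fun x => phi (x + L)) volume u v := by
    intro u v
    exact (phi_integrable.comp_add_right L).intervalIntegrable
  have key : (∫ x in a..(a+L), phi x) - ∫ x in b..(b+L), phi x
      = ∫ x in a..b, (phi x - phi (x + L)) := by
    rw [intervalIntegral.integral_sub (hint a b) (hint2 a b)]
    have e1 : ∫ x in a..b, phi (x + L) = ∫ x in (a+L)..(b+L), phi x :=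
      intervalIntegral.integral_comp_add_right phi L
    rw [e1]
    have h1 : (∫ x in a..(a+L), phi x) + ∫ x in (a+L)..(b+L), phi x
        = ∫ x in a..(b+L), phi x :=
      intervalIntegral.integral_add_adjacent_intervals (hint _ _) (hint _ _)
    have h2 : (∫ x in a..b, phi x) + ∫ x in b..(b+L), phi x = ∫ x in a..(b+L), phi x :=
      intervalIntegral.integral_add_adjacent_intervals (hint _ _) (hint _ _)
    linarith
  have pos : 0 ≤ ∫ x in a..b, (phi x - phi (x + L)) := by
    apply intervalIntegral.integral_nonneg hab
    intro u hu
    have hu1 : a ≤ u := hu.1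
    have : u ^ 2 ≤ (u + L) ^ 2 := by nlinarith
    have := phi_mono this
    linarith
  linarith [key ▸ pos]

lemma J_key2 {a b L : ℝ} (hL : 0 ≤ L) (hab : |a + L/2| ≤ b + L/2) :
    ∫ x in b..(b+L), phi x ≤ ∫ x in a..(a+L), phi x := by
  rcases le_or_gt 0 (a + L/2) with h | h
  · have := abs_of_nonneg h
    exact J_mono hL (by linarith) (by rw [this] at hab; linarith)
  · have habs : |a + L/2| = -(a + L/2) := abs_of_neg h
    rw [J_refl a L]
    exact J_mono hL (by linarith) (by rw [habs] at hab; linarith)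

lemma J_key {a b L : ℝ} (hL : 0 ≤ L) (hab : |a + L/2| ≤ |b + L/2|) :
    ∫ x in b..(b+L), phi x ≤ ∫ x in a..(a+L), phi x := by
  rcases le_or_gt 0 (b + L/2) with h | h
  · exact J_key2 hL (hab.trans_eq (abs_of_nonneg h))
  · rw [J_refl b L]
    apply J_key2 hL
    rw [abs_of_neg h] at hab
    have : (-b-L) + L/2 = -(b + L/2) := by ring
    rw [this]
    exact hab

lemma pdf_scale {b c : ℝ} (hc : 0 < c) (x : ℝ) :
    gaussianPDFReal b (Real.toNNReal (c ^ 2)) (c * x + b) = c⁻¹ * phi x := by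
  have hco : ((Real.toNNReal (c ^ 2)) : ℝ) = c ^ 2 := Real.coe_toNNReal _ (sq_nonneg c)
  simp only [phi, gaussianPDFReal, hco, sub_zero, add_sub_cancel_right, NNReal.coe_one,
    mul_one]
  have h1 : Real.sqrt (2 * Real.pi * c ^ 2) = Real.sqrt (2 * Real.pi) * c := by
    rw [Real.sqrt_mul (by positivity), Real.sqrt_sq hc.le]
  have h2 : -(c * x) ^ 2 / (2 * c ^ 2) = -x ^ 2 / 2 := by
    field_simp
  rw [h1, h2, mul_inv]
  ring

theorem statement0 (B c α Δ : ℝ) (hB : 0 ≤ B) (hc : 0 < c) (hα : α ∈ Set.Ioo (0:ℝ) 1)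
    (hΔ : stdNormalCDF Δ - stdNormalCDF (-2 * B / c - Δ) = 1 - α) :
    ∀ b ∈ Set.Icc (-B) B,
      1 - α ≤ (gaussianReal b (Real.toNNReal (c ^ 2))
        (Set.Icc (-B - c * Δ) (B + c * Δ))).toReal := by
  intro b hb
  obtain ⟨hb1, hb2⟩ := hb
  -- Δ ≥ -B/c
  have hΔB : -(B/c) ≤ Δ := by
    by_contra hlt
    push_neg at hlt
    have : Δ ≤ -2 * B / c - Δ := by
      have h2 : -2 * B / c = -(2 * (B/c)) := by ring
      rw [h2]
      linarith
    have := stdNormalCDF_mono this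
    have : (1:ℝ) - α ≤ 0 := by linarith
    linarith [hα.2]
  have hv : (Real.toNNReal (c ^ 2)) ≠ 0 := by
    simp only [ne_eq, Real.toNNReal_eq_zero, not_le]
    positivity
  set l : ℝ := -B - c * Δ with hl
  set u : ℝ := B + c * Δ with hu
  have hlu : l ≤ u := by
    have : 0 ≤ B/c + Δ := by linarith
    have := mul_le_mul_of_nonneg_left this hc.le
    simp only [hl, hu]
    have hcne : c ≠ 0 := hc.ne'
    nlinarith [mul_div_cancel₀ B hcne]
  -- measure as interval integral of standard pdf
  set l' : ℝ := (l - b) / c with hl'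
  set u' : ℝ := (u - b) / c with hu'
  have hmeas : (gaussianReal b (Real.toNNReal (c ^ 2)) (Set.Icc l u)).toReal
      = ∫ x in l'..u', phi x := by
    rw [gaussianReal_apply_eq_integral b hv,
      ENNReal.toReal_ofReal (setIntegral_nonneg measurableSet_Icc
        fun t _ => gaussianPDFReal_nonneg _ _ t)]
    rw [MeasureTheory.integral_Icc_eq_integral_Ioc,
      ← intervalIntegral.integral_of_le hlu]
    have step : ∫ x in l'..u', phi x
        = c • ∫ x in l'..u', gaussianPDFReal b (Real.toNNReal (c ^ 2)) (c * x + b) := by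
      rw [← intervalIntegral.integral_smul]
      apply intervalIntegral.integral_congr
      intro x _
      show phi x = c • gaussianPDFReal b (Real.toNNReal (c ^ 2)) (c * x + b)
      rw [pdf_scale hc, smul_eq_mul, ← mul_assoc, mul_inv_cancel₀ hc.ne', one_mul]
    rw [step, intervalIntegral.integral_comp_mul_add
      (gaussianPDFReal b (Real.toNNReal (c ^ 2))) hc.ne' b]
    have el : c * l' + b = l := by rw [hl']; field_simp; ring
    have eu : c * u' + b = u := by rw [hu']; field_simp; ring
    rw [el, eu, smul_smul, mul_inv_cancel₀ hc.ne', one_smul]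
  set L : ℝ := 2 * (B / c) + 2 * Δ with hL_def
  have hL : 0 ≤ L := by simp only [hL_def]; linarith
  set a0 : ℝ := -2 * B / c - Δ with ha0
  have e1 : (1:ℝ) - α = ∫ x in a0..(a0 + L), phi x := by
    rw [← hΔ, stdNormalCDF_sub]
    have : a0 + L = Δ := by rw [ha0, hL_def]; ring
    rw [this]
  have e2 : l' + L = u' := by
    rw [hl', hu', hL_def, hl, hu]
    field_simp
    ring
  have hcond : |l' + L / 2| ≤ |a0 + L / 2| := by
    have h1 : l' + L / 2 = -b / c := by
      rw [hl', hL_def, hl]; field_simp; ring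
    have h2 : a0 + L / 2 = -(B / c) := by
      rw [ha0, hL_def]; field_simp; ring
    rw [h1, h2, abs_div, abs_neg, abs_neg, abs_div, abs_of_pos hc, abs_of_nonneg hB]
    exact (div_le_div_iff_of_pos_right hc).mpr (abs_le.mpr ⟨hb1, hb2⟩)
  have cmp := J_key (a := l') (b := a0) hL hcond
  rw [e2] at cmp
  rw [hmeas, e1]
  exact cmp
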